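/- arXiv:2001.09892 — 3 statements merged into one kernel-verified Lean document; each statement's English description precedes it below -/
import Mathlib

section
/- Let n ≥ 1, p ≥ 2, s ∈ (0,1), and let u : ℝⁿ → ℝ be measurable. Fix x ∈ ℝⁿ and suppose there exist z_x ∈ ℝⁿ and r_x ∈ (0, |x−z_x|/2) such that u(x) ≠ u(z) for every z ∈ B_{r_x}(z_x). Then there exists a constant c_x > 0 such that for all r ∈ (0, r_x), D_r^{s,p} u(x) ≥ c_x (where the integral defining D_r^{s,p} u(x) is interpreted as a value in [0,∞]). -/
open MeasureTheory Filter Real Set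
open scoped Topology ENNReal

/-- If `u(x) ≠ u(z)` on a ball `B_{r_x}(z_x)` with
`0 < r_x < |x - z_x|/2`, then `D_r^{s,p} u(x)` (as a value in `[0,∞]`) is bounded below
by a positive constant `c_x` for all `r ∈ (0, r_x)`. -/
theorem Dker_bounded_below
    (n : ℕ) (hn : 1 ≤ n) (p s : ℝ) (hp : 2 ≤ p) (hs : s ∈ Set.Ioo (0:ℝ) 1)
    (u : EuclideanSpace ℝ (Fin n) → ℝ) (humeas : Measurable u)
    (x zx : EuclideanSpace ℝ (Fin n)) (rx : ℝ)
    (hrx : rx ∈ Set.Ioo (0:ℝ) (‖x - zx‖ / 2))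
    (hne : ∀ z ∈ Metric.ball zx rx, u x ≠ u z) :
    ∃ c : ℝ≥0∞, 0 < c ∧ ∀ r ∈ Set.Ioo (0:ℝ) rx,
      c ≤ ∫⁻ y in {y : EuclideanSpace ℝ (Fin n) | r < ‖y‖},
            ENNReal.ofReal ((|u x - u (x - y)| / ‖y‖ ^ s) ^ (p - 2) /
              (‖y‖ ^ (n : ℝ) * (‖y‖ ^ 2 - r ^ 2) ^ s)) := by
  obtain ⟨hrx0, hrx2⟩ := hrx
  obtain ⟨hs0, hs1⟩ := hs
  set B := Metric.ball (x - zx) rx with hB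
  -- on B, the norm is bounded below by rx
  have hball : ∀ y ∈ B, rx < ‖y‖ := by
    intro y hy
    rw [hB, Metric.mem_ball, dist_eq_norm] at hy
    have h1 : ‖x - zx‖ ≤ ‖y‖ + ‖(x - zx) - y‖ := by
      calc ‖x - zx‖ = ‖y + ((x - zx) - y)‖ := by
            rw [show y + ((x - zx) - y) = x - zx from by abel]
        _ ≤ ‖y‖ + ‖(x - zx) - y‖ := norm_add_le _ _
    have h2 : ‖(x - zx) - y‖ < rx := by rwa [norm_sub_rev]
    linarith
  have hmem : ∀ y ∈ B, x - y ∈ Metric.ball zx rx := by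
    intro y hy
    rw [hB, Metric.mem_ball, dist_eq_norm] at hy
    rw [Metric.mem_ball, dist_eq_norm]
    have : x - y - zx = -(y - (x - zx)) := by abel
    rw [this, norm_neg]
    exact hy
  have hmeasnum : Measurable fun y : EuclideanSpace ℝ (Fin n) =>
      (|u x - u (x - y)| / ‖y‖ ^ s) ^ (p - 2) := by
    apply Measurable.pow_const
    exact ((measurable_const.sub (humeas.comp
      (measurable_const.sub measurable_id))).abs).div (measurable_norm.pow_const s)
  have hfmeas : Measurable fun y : EuclideanSpace ℝ (Fin n) =>
      ENNReal.ofReal ((|u x - u (x - y)| / ‖y‖ ^ s) ^ (p - 2) /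
        (‖y‖ ^ (n : ℝ) * (‖y‖ ^ 2) ^ s)) := by
    apply Measurable.ennreal_ofReal
    exact hmeasnum.div ((measurable_norm.pow_const (n : ℝ)).mul
      ((measurable_norm.pow_const 2).pow_const s))
  have hfpos : ∀ y ∈ B, 0 < (|u x - u (x - y)| / ‖y‖ ^ s) ^ (p - 2) /
      (‖y‖ ^ (n : ℝ) * (‖y‖ ^ 2) ^ s) := by
    intro y hy
    have hy0 : 0 < ‖y‖ := lt_trans hrx0 (hball y hy)
    have hne' : u x ≠ u (x - y) := hne _ (hmem y hy)
    have h1 : 0 < |u x - u (x - y)| := abs_pos.mpr (sub_ne_zero.mpr hne')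
    positivity
  refine ⟨∫⁻ y in B, ENNReal.ofReal ((|u x - u (x - y)| / ‖y‖ ^ s) ^ (p - 2) /
      (‖y‖ ^ (n : ℝ) * (‖y‖ ^ 2) ^ s)), ?_, ?_⟩
  · rw [← lintegral_indicator measurableSet_ball _, lintegral_pos_iff_support
      (hfmeas.indicator measurableSet_ball)]
    have hsub : B ⊆ Function.support (B.indicator fun y =>
        ENNReal.ofReal ((|u x - u (x - y)| / ‖y‖ ^ s) ^ (p - 2) /
          (‖y‖ ^ (n : ℝ) * (‖y‖ ^ 2) ^ s))) := by
      intro y hy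
      rw [Function.mem_support, Set.indicator_of_mem hy]
      simp only [ne_eq, ENNReal.ofReal_eq_zero, not_le]
      exact hfpos y hy
    calc (0 : ℝ≥0∞) < volume B := Metric.measure_ball_pos _ _ hrx0
      _ ≤ _ := measure_mono hsub
  · intro r hr
    obtain ⟨hr0, hrrx⟩ := hr
    have hsub : B ⊆ {y : EuclideanSpace ℝ (Fin n) | r < ‖y‖} := by
      intro y hy
      exact lt_trans hrrx (hball y hy)
    calc ∫⁻ y in B, ENNReal.ofReal ((|u x - u (x - y)| / ‖y‖ ^ s) ^ (p - 2) /
          (‖y‖ ^ (n : ℝ) * (‖y‖ ^ 2) ^ s))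
        ≤ ∫⁻ y in B, ENNReal.ofReal ((|u x - u (x - y)| / ‖y‖ ^ s) ^ (p - 2) /
              (‖y‖ ^ (n : ℝ) * (‖y‖ ^ 2 - r ^ 2) ^ s)) := by
          apply setLIntegral_mono
          · apply Measurable.ennreal_ofReal
            exact hmeasnum.div ((measurable_norm.pow_const (n : ℝ)).mul
              (((measurable_norm.pow_const 2).sub measurable_const).pow_const s))
          · intro y hy
            have hy0 : 0 < ‖y‖ := lt_trans hrx0 (hball y hy)
            have hry : r < ‖y‖ := lt_trans hrrx (hball y hy)
            have hden : 0 < ‖y‖ ^ 2 - r ^ 2 := by nlinarith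
            apply ENNReal.ofReal_le_ofReal
            gcongr
            nlinarith
      _ ≤ _ := lintegral_mono_set hsub
end

section
/- Let n ≥ 1, s ∈ (1/2,1), η > 0, x ∈ ℝⁿ, and let u : ℝⁿ → ℝ be bounded and measurable on ℝⁿ, twice continuously differentiable on B_η(x), with ∇u(x) ≠ 0. Then, as r → 0⁺: u(x) = M_r^{s,∞} u(x) + c_s r^{2s} (-Δ)^s_∞ u(x) + O(r²), i.e. there exist C > 0 and r₀ > 0 such that |u(x) − M_r^{s,∞} u(x) − c_s r^{2s} (-Δ)^s_∞ u(x)| ≤ C r² for all r ∈ (0,r₀). -/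
open MeasureTheory Filter Real Set
open scoped Topology

noncomputable section

set_option maxHeartbeats 1000000

/-- `c_s := (1/2)(∫₁^∞ ρ⁻¹(ρ²-1)^{-s} dρ)⁻¹`. -/
def csInf (s : ℝ) : ℝ := (1 / 2) * (∫ ρ in Set.Ioi (1:ℝ), (ρ * (ρ ^ 2 - 1) ^ s)⁻¹)⁻¹


lemma sq_rpow' {s t : ℝ} (ht : 0 ≤ t) : (t^2) ^ s = t ^ (2*s) := by
  rw [← Real.rpow_natCast t 2, ← Real.rpow_mul ht]; norm_num

lemma kernel_meas (s : ℝ) : Measurable (fun t : ℝ => (t * (t ^ 2 - 1) ^ s)⁻¹) := by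
  fun_prop

-- integrability of the csInf kernel
lemma kernel_integrable {s : ℝ} (hs : s ∈ Set.Ioo (1/2 : ℝ) 1) :
    IntegrableOn (fun t : ℝ => (t * (t ^ 2 - 1) ^ s)⁻¹) (Set.Ioi 1) := by
  obtain ⟨hs1, hs2⟩ := hs
  have hs0 : 0 < s := by linarith
  rw [← Set.Ioc_union_Ioi_eq_Ioi (by norm_num : (1:ℝ) ≤ 2)]
  apply MeasureTheory.IntegrableOn.union
  · -- on Ioc 1 2, dominated by (t-1)^(-s)
    have hint : IntegrableOn (fun t : ℝ => (t - 1) ^ (-s)) (Set.Ioc 1 2) := by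
      have h := (intervalIntegral.intervalIntegrable_rpow' (r := -s) (by linarith)
        (a := 0) (b := 1)).comp_sub_right 1
      rw [intervalIntegrable_iff_integrableOn_Ioc_of_le (by norm_num)] at h
      norm_num at h
      exact h
    apply hint.mono' ((kernel_meas s).aestronglyMeasurable)
    filter_upwards [ae_restrict_mem measurableSet_Ioc] with t ht
    obtain ⟨ht1, ht2⟩ := ht
    have h1 : (0:ℝ) < t - 1 := by linarith
    have h2 : (0:ℝ) < t ^ 2 - 1 := by nlinarith
    have h3 : (t - 1) ^ s ≤ t * (t ^ 2 - 1) ^ s := by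
      calc (t - 1) ^ s ≤ (t ^ 2 - 1) ^ s := by
            apply Real.rpow_le_rpow h1.le (by nlinarith) hs0.le
        _ ≤ t * (t ^ 2 - 1) ^ s := by
            nlinarith [Real.rpow_pos_of_pos h2 s]
    have h4 : (0:ℝ) < (t - 1) ^ s := Real.rpow_pos_of_pos h1 s
    rw [Real.norm_eq_abs, abs_of_nonneg (by positivity), Real.rpow_neg h1.le]
    exact inv_anti₀ h4 h3
  · -- on Ioi 2, dominated by 2 * t^(-(1+2s))
    have hint : IntegrableOn (fun t : ℝ => 2 * t ^ (-(1+2*s))) (Set.Ioi 2) :=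
      (integrableOn_Ioi_rpow_of_lt (by linarith) (by norm_num)).const_mul 2
    apply hint.mono' ((kernel_meas s).aestronglyMeasurable)
    filter_upwards [ae_restrict_mem measurableSet_Ioi] with t ht
    rw [Set.mem_Ioi] at ht
    have ht0 : (0:ℝ) < t := by linarith
    have h2 : (0:ℝ) < t ^ 2 - 1 := by nlinarith
    have hlow : t ^ (1+2*s) / 2 ≤ t * (t ^ 2 - 1) ^ s := by
      have e1 : (t^2/2 : ℝ) ^ s ≤ (t ^ 2 - 1) ^ s :=
        Real.rpow_le_rpow (by positivity) (by nlinarith) hs0.le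
      have e2 : t ^ (2*s) / 2 ≤ (t^2/2 : ℝ) ^ s := by
        rw [Real.div_rpow (by positivity) (by norm_num), sq_rpow' ht0.le]
        have : (2:ℝ) ^ s ≤ 2 := by
          calc (2:ℝ) ^ s ≤ (2:ℝ) ^ (1:ℝ) :=
                Real.rpow_le_rpow_of_exponent_le one_le_two hs2.le
            _ = 2 := Real.rpow_one 2
        apply div_le_div_of_nonneg_left (Real.rpow_nonneg ht0.le _) (by positivity) this
      have e3 : t ^ (1+2*s) = t * t ^ (2*s) := by
        rw [Real.rpow_add ht0, Real.rpow_one]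
      calc t ^ (1+2*s) / 2 = t * (t ^ (2*s) / 2) := by rw [e3]; ring
        _ ≤ t * (t^2/2 : ℝ) ^ s := by
            apply mul_le_mul_of_nonneg_left e2 ht0.le
        _ ≤ t * (t ^ 2 - 1) ^ s := mul_le_mul_of_nonneg_left e1 ht0.le
    have hpos : (0:ℝ) < t ^ (1+2*s) / 2 := by positivity
    rw [Real.norm_eq_abs, abs_of_nonneg (by positivity)]
    calc (t * (t ^ 2 - 1) ^ s)⁻¹ ≤ (t ^ (1+2*s) / 2)⁻¹ := inv_anti₀ hpos hlow
      _ = 2 * t ^ (-(1+2*s)) := by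
          rw [Real.rpow_neg ht0.le]; field_simp

lemma kernel_integral_pos {s : ℝ} (hs : s ∈ Set.Ioo (1/2 : ℝ) 1) :
    0 < ∫ t in Set.Ioi (1:ℝ), (t * (t ^ 2 - 1) ^ s)⁻¹ := by
  obtain ⟨hs1, hs2⟩ := hs
  have hs0 : 0 < s := by linarith
  have hnn : ∀ t ∈ Set.Ioi (1:ℝ), (0:ℝ) ≤ (t * (t ^ 2 - 1) ^ s)⁻¹ := by
    intro t ht
    rw [Set.mem_Ioi] at ht
    have : (0:ℝ) < t ^ 2 - 1 := by nlinarith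
    positivity
  have step1 : (1/6 : ℝ) * (volume (Set.Ioc (3/2 : ℝ) 2)).toReal
      ≤ ∫ t in Set.Ioc (3/2:ℝ) 2, (t * (t ^ 2 - 1) ^ s)⁻¹ := by
    apply setIntegral_ge_of_const_le_real measurableSet_Ioc
    · exact (measure_Ioc_lt_top).ne
    · intro t ht
      obtain ⟨ht1, ht2⟩ := ht
      have h2 : (0:ℝ) < t ^ 2 - 1 := by nlinarith
      have h3 : t * (t ^ 2 - 1) ^ s ≤ 6 := by
        have e1 : (t ^ 2 - 1 : ℝ) ^ s ≤ 3 ^ s :=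
          Real.rpow_le_rpow h2.le (by nlinarith) hs0.le
        have e2 : (3:ℝ) ^ s ≤ 3 := by
          calc (3:ℝ) ^ s ≤ (3:ℝ) ^ (1:ℝ) :=
                Real.rpow_le_rpow_of_exponent_le (by norm_num) hs2.le
            _ = 3 := Real.rpow_one 3
        nlinarith [Real.rpow_pos_of_pos h2 s]
      have h4 : (0:ℝ) < t * (t ^ 2 - 1) ^ s := by positivity
      rw [le_inv_comm₀ (by norm_num) h4]
      linarith
    · exact (kernel_integrable ⟨hs1, hs2⟩).mono_set (fun t ht => lt_of_lt_of_le (by norm_num) ht.1.le)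
  have step2 : (∫ t in Set.Ioc (3/2:ℝ) 2, (t * (t ^ 2 - 1) ^ s)⁻¹)
      ≤ ∫ t in Set.Ioi (1:ℝ), (t * (t ^ 2 - 1) ^ s)⁻¹ := by
    apply setIntegral_mono_set (kernel_integrable ⟨hs1, hs2⟩)
    · filter_upwards [ae_restrict_mem measurableSet_Ioi] with t ht using hnn t ht
    · exact HasSubset.Subset.eventuallyLE (fun t ht => lt_of_lt_of_le (by norm_num) ht.1.le)
  have hvol : (volume (Set.Ioc (3/2 : ℝ) 2)).toReal = 1/2 := by
    rw [Real.volume_Ioc]; rw [ENNReal.toReal_ofReal (by norm_num)]; norm_num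
  rw [hvol] at step1
  linarith

lemma csInf_pos {s : ℝ} (hs : s ∈ Set.Ioo (1/2 : ℝ) 1) : 0 < csInf s := by
  have := kernel_integral_pos hs
  unfold csInf
  positivity
lemma G_meas (s : ℝ) :
    Measurable (fun t : ℝ => t ^ 2 * (((t ^ 2 - 1) ^ s * t)⁻¹ - (t ^ (1+2*s))⁻¹)) := by
  fun_prop

lemma G_nonneg {s : ℝ} (hs : s ∈ Set.Ioo (1/2 : ℝ) 1) {t : ℝ} (ht : 1 < t) :
    0 ≤ t ^ 2 * (((t ^ 2 - 1) ^ s * t)⁻¹ - (t ^ (1+2*s))⁻¹) := by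
  obtain ⟨hs1, hs2⟩ := hs
  have hs0 : 0 < s := by linarith
  have ht0 : (0:ℝ) < t := by linarith
  have h2 : (0:ℝ) < t ^ 2 - 1 := by nlinarith
  have key : (t ^ 2 - 1) ^ s * t ≤ t ^ (1+2*s) := by
    have e1 : (t ^ 2 - 1 : ℝ) ^ s ≤ t ^ (2*s) := by
      rw [← sq_rpow' ht0.le]
      exact Real.rpow_le_rpow h2.le (by nlinarith) hs0.le
    calc (t ^ 2 - 1) ^ s * t ≤ t ^ (2*s) * t :=
          mul_le_mul_of_nonneg_right e1 ht0.le
      _ = t ^ (1+2*s) := by rw [Real.rpow_add ht0, Real.rpow_one]; ring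
  have hpos : (0:ℝ) < (t ^ 2 - 1) ^ s * t := by positivity
  have := inv_anti₀ hpos key
  nlinarith

lemma G_integrable {s : ℝ} (hs : s ∈ Set.Ioo (1/2 : ℝ) 1) :
    IntegrableOn (fun t : ℝ => t ^ 2 * (((t ^ 2 - 1) ^ s * t)⁻¹ - (t ^ (1+2*s))⁻¹))
      (Set.Ioi 1) := by
  obtain ⟨hs1, hs2⟩ := hs
  have hs0 : 0 < s := by linarith
  rw [← Set.Ioc_union_Ioi_eq_Ioi (by norm_num : (1:ℝ) ≤ 2)]
  apply MeasureTheory.IntegrableOn.union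
  · -- dominated by 4 * (t-1)^(-s)
    have hint : IntegrableOn (fun t : ℝ => 4 * (t - 1) ^ (-s)) (Set.Ioc 1 2) := by
      have h := (intervalIntegral.intervalIntegrable_rpow' (r := -s) (by linarith)
        (a := 0) (b := 1)).comp_sub_right 1
      rw [intervalIntegrable_iff_integrableOn_Ioc_of_le (by norm_num)] at h
      norm_num at h
      exact h.const_mul 4
    apply hint.mono' ((G_meas s).aestronglyMeasurable)
    filter_upwards [ae_restrict_mem measurableSet_Ioc] with t ht
    obtain ⟨ht1, ht2⟩ := ht
    have ht0 : (0:ℝ) < t := by linarith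
    have h1 : (0:ℝ) < t - 1 := by linarith
    have h2 : (0:ℝ) < t ^ 2 - 1 := by nlinarith
    rw [Real.norm_eq_abs, abs_of_nonneg (G_nonneg ⟨hs1, hs2⟩ ht1)]
    have hb : ((t ^ 2 - 1) ^ s * t)⁻¹ ≤ (t - 1) ^ (-s) := by
      rw [Real.rpow_neg h1.le]
      apply inv_anti₀ (Real.rpow_pos_of_pos h1 s)
      calc (t - 1) ^ s ≤ (t ^ 2 - 1) ^ s :=
            Real.rpow_le_rpow h1.le (by nlinarith) hs0.le
        _ ≤ (t ^ 2 - 1) ^ s * t := by nlinarith [Real.rpow_pos_of_pos h2 s]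
    have hW : (0:ℝ) < (t ^ (1+2*s))⁻¹ := by
      have := Real.rpow_pos_of_pos ht0 (1+2*s); positivity
    have ht4 : t ^ 2 ≤ 4 := by nlinarith
    have hb0 : (0:ℝ) ≤ ((t ^ 2 - 1) ^ s * t)⁻¹ := by positivity
    have hd0 : ((t ^ 2 - 1) ^ s * t)⁻¹ - (t ^ (1+2*s))⁻¹ ≤ (t - 1) ^ (-s) := by
      linarith
    have hd0' : (0:ℝ) ≤ ((t ^ 2 - 1) ^ s * t)⁻¹ - (t ^ (1+2*s))⁻¹ := by
      nlinarith [G_nonneg (⟨hs1, hs2⟩ : s ∈ Set.Ioo (1/2:ℝ) 1) ht1, sq_nonneg t]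
    calc t ^ 2 * (((t ^ 2 - 1) ^ s * t)⁻¹ - (t ^ (1+2*s))⁻¹)
        ≤ 4 * (((t ^ 2 - 1) ^ s * t)⁻¹ - (t ^ (1+2*s))⁻¹) := by nlinarith
      _ ≤ 4 * (t - 1) ^ (-s) := by linarith
  · -- dominated by 2 * t^(-(1+2s))
    have hint : IntegrableOn (fun t : ℝ => 2 * t ^ (-(1+2*s))) (Set.Ioi 2) :=
      (integrableOn_Ioi_rpow_of_lt (by linarith) (by norm_num)).const_mul 2
    apply hint.mono' ((G_meas s).aestronglyMeasurable)
    filter_upwards [ae_restrict_mem measurableSet_Ioi] with t ht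
    rw [Set.mem_Ioi] at ht
    have ht0 : (0:ℝ) < t := by linarith
    have ht1 : (1:ℝ) < t := by linarith
    have h2 : (0:ℝ) < t ^ 2 - 1 := by nlinarith
    rw [Real.norm_eq_abs, abs_of_nonneg (G_nonneg ⟨hs1, hs2⟩ ht1)]
    -- key pointwise bound: (t²-1)^(-s) - (t²)^(-s) ≤ (t²)^(-s) * (t² - (t²-1))/(t²-1)
    set a : ℝ := t ^ 2 - 1 with ha
    set b : ℝ := t ^ 2 with hb
    have hab : a ≤ b := by rw [ha]; linarith
    have hbpos : (0:ℝ) < b := by positivity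
    have hkey : a ^ (-s) - b ^ (-s) ≤ b ^ (-s) * (b - a) / a := by
      have e1 : a ^ (1 - s) ≤ b ^ (1 - s) :=
        Real.rpow_le_rpow h2.le hab (by linarith)
      have e2 : a ^ (1 - s) = a * a ^ (-s) := by
        rw [show (1:ℝ) - s = 1 + (-s) by ring, Real.rpow_add h2, Real.rpow_one]
      have e3 : b ^ (1 - s) = b * b ^ (-s) := by
        rw [show (1:ℝ) - s = 1 + (-s) by ring, Real.rpow_add hbpos, Real.rpow_one]
      rw [e2, e3] at e1
      have e4 : a ^ (-s) ≤ b * b ^ (-s) / a := (le_div_iff₀ h2).mpr (by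
        calc a ^ (-s) * a = a * a ^ (-s) := by ring
          _ ≤ b * b ^ (-s) := e1)
      have e5 : b ^ (-s) * (b - a) / a = b * b ^ (-s) / a - b ^ (-s) := by
        field_simp
      linarith
    have i1 : ((t ^ 2 - 1) ^ s * t)⁻¹ = a ^ (-s) * t⁻¹ := by
      rw [mul_inv, Real.rpow_neg h2.le]
    have i2 : (t ^ (1+2*s))⁻¹ = b ^ (-s) * t⁻¹ := by
      rw [Real.rpow_add ht0, Real.rpow_one, ← sq_rpow' ht0.le, mul_inv,
        Real.rpow_neg hbpos.le, mul_comm]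
    have hg : t ^ 2 * (((t ^ 2 - 1) ^ s * t)⁻¹ - (t ^ (1+2*s))⁻¹)
        = t * (a ^ (-s) - b ^ (-s)) := by
      rw [i1, i2]
      field_simp
    rw [hg]
    have hba : b - a = 1 := by simp [ha, hb]
    have ha2 : b / 2 ≤ a := by simp only [ha, hb]; nlinarith
    have hbs : (0:ℝ) < b ^ (-s) := Real.rpow_pos_of_pos hbpos _
    calc t * (a ^ (-s) - b ^ (-s)) ≤ t * (b ^ (-s) * (b - a) / a) :=
          mul_le_mul_of_nonneg_left hkey ht0.le
      _ ≤ t * (b ^ (-s) * 2 / b) := by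
          apply mul_le_mul_of_nonneg_left _ ht0.le
          rw [hba, mul_one]
          rw [div_le_div_iff₀ h2 hbpos]
          nlinarith
      _ = 2 * t ^ (-(1+2*s)) := by
          have j1 : b ^ (-s) = t ^ (-(2*s)) := by
            rw [hb, sq_rpow' ht0.le]; congr 1; ring
          have j2 : t ^ (-(1+2*s)) = t⁻¹ * t ^ (-(2*s)) := by
            rw [show (-(1+2*s) : ℝ) = -1 + -(2*s) by ring, Real.rpow_add ht0,
              Real.rpow_neg_one]
          rw [j1, j2, hb]
          have h4 : (0:ℝ) < t ^ (-(2*s)) := Real.rpow_pos_of_pos ht0 _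
          field_simp

lemma taylor_even_bound {g : ℝ → ℝ} {η δ : ℝ} (hη : 0 < η) (hδ : 0 < δ) (hδη : δ < η)
    (hg : ContDiffOn ℝ 2 g (Set.Ioo (-η) η)) :
    ∃ C₂ : ℝ, 0 ≤ C₂ ∧ ∀ ρ ∈ Set.Icc 0 δ, |2 * g 0 - g ρ - g (-ρ)| ≤ C₂ * ρ ^ 2 := by
  set S : Set ℝ := Set.Ioo (-η) η with hS
  have hSopen : IsOpen S := isOpen_Ioo
  have hKS : Set.Icc (-δ) δ ⊆ S := fun t ht =>
    ⟨lt_of_lt_of_le (by linarith) ht.1, lt_of_le_of_lt ht.2 hδη⟩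
  have hgdiff : ∀ t ∈ S, DifferentiableAt ℝ g t := fun t ht =>
    (hg.contDiffAt (hSopen.mem_nhds ht)).differentiableAt (by norm_num)
  have hg1 : ContDiffOn ℝ 1 (deriv g) S := hg.deriv_of_isOpen hSopen (by norm_num)
  have hg1diff : ∀ t ∈ S, DifferentiableAt ℝ (deriv g) t := fun t ht =>
    (hg1.contDiffAt (hSopen.mem_nhds ht)).differentiableAt one_ne_zero
  have hg2cont : ContinuousOn (deriv (deriv g)) S :=
    hg1.continuousOn_deriv_of_isOpen hSopen le_rfl
  obtain ⟨C₂, hC₂⟩ :=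
    (isCompact_Icc (a := -δ) (b := δ)).exists_bound_of_continuousOn (hg2cont.mono hKS)
  have hC₂0 : 0 ≤ C₂ := le_trans (norm_nonneg _) (hC₂ 0 ⟨by linarith, by linarith⟩)
  refine ⟨2 * C₂, by linarith, ?_⟩
  intro ρ hρ
  obtain ⟨hρ0, hρδ⟩ := hρ
  -- MVT for deriv g on Icc (-δ) δ
  have hd1 : ∀ p ∈ Set.Icc (-δ) δ, ∀ q ∈ Set.Icc (-δ) δ,
      |deriv g p - deriv g q| ≤ C₂ * |p - q| := by
    intro p hp q hq
    have := (convex_Icc (-δ) δ).norm_image_sub_le_of_norm_deriv_le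
      (fun t ht => hg1diff t (hKS ht)) (fun t ht => hC₂ t ht) hq hp
    simpa [Real.norm_eq_abs] using this
  -- MVT for ψ t = g t + g (-t) on Icc 0 ρ
  set ψ : ℝ → ℝ := fun t => g t + g (-t) with hψ
  have hmem : ∀ t ∈ Set.Icc 0 ρ, t ∈ Set.Icc (-δ) δ := fun t ht =>
    ⟨by linarith [ht.1], le_trans ht.2 hρδ⟩
  have hmem' : ∀ t ∈ Set.Icc 0 ρ, -t ∈ Set.Icc (-δ) δ := fun t ht =>
    ⟨by linarith [le_trans ht.2 hρδ], by linarith [ht.1]⟩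
  have hψd : ∀ t ∈ Set.Icc 0 ρ, HasDerivWithinAt ψ
      (deriv g t + deriv g (-t) * (-1)) (Set.Icc 0 ρ) t := by
    intro t ht
    have h1 : HasDerivAt g (deriv g t) t := (hgdiff t (hKS (hmem t ht))).hasDerivAt
    have h2 : HasDerivAt (fun t : ℝ => g (-t)) (deriv g (-t) * (-1)) t :=
      HasDerivAt.comp t (hgdiff (-t) (hKS (hmem' t ht))).hasDerivAt (hasDerivAt_neg t)
    exact ((h1.add h2)).hasDerivWithinAt
  have hbound : ∀ t ∈ Set.Icc 0 ρ, ‖deriv g t + deriv g (-t) * (-1)‖ ≤ 2 * C₂ * ρ := by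
    intro t ht
    have := hd1 t (hmem t ht) (-t) (hmem' t ht)
    have habs : |t - -t| = 2 * t := by
      rw [sub_neg_eq_add, abs_of_nonneg (by linarith [ht.1])]; ring
    rw [habs] at this
    have htρ : t ≤ ρ := ht.2
    rw [Real.norm_eq_abs]
    calc |deriv g t + deriv g (-t) * (-1)| = |deriv g t - deriv g (-t)| := by ring_nf
      _ ≤ C₂ * (2 * t) := this
      _ ≤ 2 * C₂ * ρ := by nlinarith
  have hmvt := (convex_Icc 0 ρ).norm_image_sub_le_of_norm_hasDerivWithin_le
    hψd hbound (Set.left_mem_Icc.mpr hρ0) (Set.right_mem_Icc.mpr hρ0)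
  rw [Real.norm_eq_abs] at hmvt
  have : |2 * g 0 - g ρ - g (-ρ)| = |ψ ρ - ψ 0| := by
    rw [hψ]; simp only [neg_zero]
    rw [abs_sub_comm]
    congr 1
    ring
  rw [this]
  calc |ψ ρ - ψ 0| ≤ 2 * C₂ * ρ * ‖ρ - 0‖ := hmvt
    _ = 2 * C₂ * ρ ^ 2 := by
        rw [sub_zero, Real.norm_eq_abs, abs_of_nonneg hρ0]; ring
lemma rpow_combine {r a b : ℝ} (hr : 0 < r) : r ^ a * r ^ b = r ^ (a + b) :=
  (Real.rpow_add hr a b).symm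

lemma pointK {s r t : ℝ} (hr : 0 < r) (ht : 1 < t) :
    (((r*t)^2 - r^2) ^ s * (r*t))⁻¹ = (r^(1+2*s))⁻¹ * ((t^2-1)^s * t)⁻¹ := by
  have h1 : ((r*t)^2 - r^2 : ℝ) = r^2 * (t^2-1) := by ring
  have h2 : (0:ℝ) < t ^ 2 - 1 := by nlinarith
  rw [h1, Real.mul_rpow (by positivity) h2.le, sq_rpow' hr.le]
  rw [show r ^ (2*s) * (t^2-1)^s * (r*t) = (r^(2*s) * r) * ((t^2-1)^s * t) by ring]
  rw [mul_inv]
  congr 2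
  rw [show (1+2*s:ℝ) = 2*s + 1 by ring, Real.rpow_add hr, Real.rpow_one]

lemma pointW {s r t : ℝ} (hr : 0 < r) (ht : 1 < t) :
    ((r*t) ^ (1+2*s))⁻¹ = (r^(1+2*s))⁻¹ * (t ^ (1+2*s))⁻¹ := by
  rw [Real.mul_rpow hr.le (by linarith), mul_inv]

lemma K_subst {s r : ℝ} (hs : s ∈ Set.Ioo (1/2 : ℝ) 1) (hr : 0 < r)
    (hker : IntegrableOn (fun t : ℝ => (t * (t ^ 2 - 1) ^ s)⁻¹) (Set.Ioi 1)) :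
    IntegrableOn (fun ρ : ℝ => ((ρ^2 - r^2) ^ s * ρ)⁻¹) (Set.Ioi r) ∧
    ∫ ρ in Set.Ioi r, ((ρ^2 - r^2) ^ s * ρ)⁻¹
      = r ^ (-(2*s)) * ∫ t in Set.Ioi (1:ℝ), (t * (t^2-1)^s)⁻¹ := by
  have hker' : IntegrableOn
      (fun t : ℝ => (r^(1+2*s))⁻¹ * (t * (t ^ 2 - 1) ^ s)⁻¹) (Set.Ioi 1) :=
    hker.const_mul _
  have hcongr : ∀ t ∈ Set.Ioi (1:ℝ),
      ((( r*t)^2 - r^2) ^ s * (r*t))⁻¹ = (r^(1+2*s))⁻¹ * (t * (t ^ 2 - 1) ^ s)⁻¹ := by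
    intro t ht
    rw [pointK hr ht, mul_comm t _]
  have hint : IntegrableOn (fun t : ℝ => (((r*t)^2 - r^2) ^ s * (r*t))⁻¹) (Set.Ioi 1) :=
    hker'.congr_fun (fun t ht => (hcongr t ht).symm) measurableSet_Ioi
  have hmain : IntegrableOn (fun ρ : ℝ => ((ρ^2 - r^2) ^ s * ρ)⁻¹) (Set.Ioi r) := by
    have := (integrableOn_Ioi_comp_mul_left_iff
      (fun ρ : ℝ => ((ρ^2 - r^2) ^ s * ρ)⁻¹) 1 hr).mp (by simpa using hint)
    simpa using this
  refine ⟨hmain, ?_⟩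
  have heq := integral_comp_mul_left_Ioi
    (fun ρ : ℝ => ((ρ^2 - r^2) ^ s * ρ)⁻¹) 1 hr
  simp only [mul_one, smul_eq_mul] at heq
  have heq2 : (∫ t in Set.Ioi (1:ℝ), (((r*t)^2 - r^2) ^ s * (r*t))⁻¹)
      = (r^(1+2*s))⁻¹ * ∫ t in Set.Ioi (1:ℝ), (t * (t ^ 2 - 1) ^ s)⁻¹ := by
    rw [setIntegral_congr_fun measurableSet_Ioi hcongr, integral_const_mul]
  rw [heq2] at heq
  have : (∫ ρ in Set.Ioi r, ((ρ^2 - r^2) ^ s * ρ)⁻¹)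
      = r * ((r^(1+2*s))⁻¹ * ∫ t in Set.Ioi (1:ℝ), (t * (t ^ 2 - 1) ^ s)⁻¹) := by
    rw [heq, ← mul_assoc, mul_inv_cancel₀ hr.ne', one_mul]
  rw [this, ← mul_assoc]
  congr 1
  rw [← Real.rpow_neg hr.le]
  nth_rewrite 1 [← Real.rpow_one r]
  rw [rpow_combine hr]
  congr 1
  ring

lemma rsq_mul_inv {s r : ℝ} (hr : 0 < r) : r^2 * (r^(1+2*s))⁻¹ = r ^ (1-2*s) := by
  rw [← Real.rpow_neg hr.le, ← Real.rpow_natCast r 2, rpow_combine hr]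
  congr 1
  push_cast
  ring

lemma F_subst {s r : ℝ} (hs : s ∈ Set.Ioo (1/2 : ℝ) 1) (hr : 0 < r)
    (hG : IntegrableOn (fun t : ℝ => t ^ 2 * (((t ^ 2 - 1) ^ s * t)⁻¹ - (t ^ (1+2*s))⁻¹))
      (Set.Ioi 1)) :
    IntegrableOn (fun ρ : ℝ => ρ^2 * (((ρ^2 - r^2) ^ s * ρ)⁻¹ - (ρ^(1+2*s))⁻¹)) (Set.Ioi r) ∧
    ∫ ρ in Set.Ioi r, ρ^2 * (((ρ^2 - r^2) ^ s * ρ)⁻¹ - (ρ^(1+2*s))⁻¹)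
      = r ^ (2-2*s) * ∫ t in Set.Ioi (1:ℝ),
          t ^ 2 * (((t ^ 2 - 1) ^ s * t)⁻¹ - (t ^ (1+2*s))⁻¹) := by
  set G : ℝ → ℝ := fun t => t ^ 2 * (((t ^ 2 - 1) ^ s * t)⁻¹ - (t ^ (1+2*s))⁻¹) with hGdef
  set F : ℝ → ℝ := fun ρ => ρ^2 * (((ρ^2 - r^2) ^ s * ρ)⁻¹ - (ρ^(1+2*s))⁻¹) with hFdef
  have hcongr : ∀ t ∈ Set.Ioi (1:ℝ), F (r*t) = r ^ (1-2*s) * G t := by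
    intro t ht
    rw [Set.mem_Ioi] at ht
    have ht0 : (0:ℝ) < t := by linarith
    simp only [hFdef, hGdef]
    rw [pointK hr ht, pointW hr ht, mul_pow, ← rsq_mul_inv hr]
    ring
  have hG' : IntegrableOn (fun t : ℝ => r ^ (1-2*s) * G t) (Set.Ioi 1) := hG.const_mul _
  have hint : IntegrableOn (fun t : ℝ => F (r*t)) (Set.Ioi 1) :=
    hG'.congr_fun (fun t ht => (hcongr t ht).symm) measurableSet_Ioi
  have hmain : IntegrableOn F (Set.Ioi r) := by
    have := (integrableOn_Ioi_comp_mul_left_iff F 1 hr).mp hint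
    simpa using this
  refine ⟨hmain, ?_⟩
  have heq := integral_comp_mul_left_Ioi F 1 hr
  simp only [mul_one, smul_eq_mul] at heq
  have heq2 : (∫ t in Set.Ioi (1:ℝ), F (r*t)) = r ^ (1-2*s) * ∫ t in Set.Ioi (1:ℝ), G t := by
    rw [setIntegral_congr_fun measurableSet_Ioi hcongr, integral_const_mul]
  rw [heq2] at heq
  rw [show (∫ ρ in Set.Ioi r, F ρ) = r * (r⁻¹ * ∫ ρ in Set.Ioi r, F ρ) by
    rw [← mul_assoc, mul_inv_cancel₀ hr.ne', one_mul], ← heq, ← mul_assoc]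
  congr 1
  nth_rewrite 1 [← Real.rpow_one r]
  rw [rpow_combine hr]
  congr 1
  ring

/-- For `u` bounded, measurable, `C²` near `x` and `∇u(x) ≠ 0`, with
`z(x) = ∇u(x)/|∇u(x)|`:  `u(x) = M_r^{s,∞}u(x) + c_s r^{2s} (-Δ)^s_∞ u(x) + O(r²)`
as `r → 0⁺`. -/
theorem infinity_fractional_expansion
    (n : ℕ) (hn : 1 ≤ n) (s : ℝ) (hs : s ∈ Set.Ioo (1/2 : ℝ) 1)
    (η : ℝ) (hη : 0 < η) (x : EuclideanSpace ℝ (Fin n))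
    (u : EuclideanSpace ℝ (Fin n) → ℝ)
    (hubd : ∃ M : ℝ, ∀ y, |u y| ≤ M) (humeas : Measurable u)
    (hu2 : ContDiffOn ℝ 2 u (Metric.ball x η))
    (hgrad : gradient u x ≠ 0) :
    ∃ C > (0:ℝ), ∃ r₀ > (0:ℝ), ∀ r ∈ Set.Ioo (0:ℝ) r₀,
      |u x -
          csInf s * r ^ (2 * s) *
            (∫ ρ in Set.Ioi r,
              (u (x + ρ • (‖gradient u x‖⁻¹ • gradient u x)) +
                  u (x - ρ • (‖gradient u x‖⁻¹ • gradient u x))) *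
                ((ρ ^ 2 - r ^ 2) ^ s * ρ)⁻¹) -
          csInf s * r ^ (2 * s) *
            (∫ ρ in Set.Ioi (0:ℝ),
              (2 * u x - u (x + ρ • (‖gradient u x‖⁻¹ • gradient u x)) -
                  u (x - ρ • (‖gradient u x‖⁻¹ • gradient u x))) / ρ ^ (1 + 2 * s))|
        ≤ C * r ^ 2 := by
  obtain ⟨hs1, hs2⟩ := hs
  have hs0 : (0:ℝ) < s := by linarith
  obtain ⟨M, hM⟩ := hubd
  have hM0 : 0 ≤ M := le_trans (abs_nonneg _) (hM x)
  set z : EuclideanSpace ℝ (Fin n) := ‖gradient u x‖⁻¹ • gradient u x with hzdef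
  have hznorm : ‖z‖ = 1 := by
    rw [hzdef, norm_smul, norm_inv, norm_norm,
      inv_mul_cancel₀ (norm_ne_zero_iff.mpr hgrad)]
  set φ : ℝ → ℝ := fun ρ => u (x + ρ • z) + u (x - ρ • z) with hφdef
  have hφmeas : Measurable φ := by
    apply Measurable.add
    · exact humeas.comp ((continuous_const.add (continuous_id.smul continuous_const)).measurable)
    · exact humeas.comp ((continuous_const.sub (continuous_id.smul continuous_const)).measurable)
  set h : ℝ → ℝ := fun ρ => 2 * u x - φ ρ with hhdef
  have hhmeas : Measurable h := measurable_const.sub hφmeas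
  have hh4 : ∀ ρ, |h ρ| ≤ 4 * M := by
    intro ρ
    have h1 := abs_le.mp (hM (x + ρ • z))
    have h2 := abs_le.mp (hM (x - ρ • z))
    have h3 := abs_le.mp (hM x)
    rw [abs_le]
    constructor <;> simp only [hhdef, hφdef] <;> linarith
  -- Taylor bound
  set δ : ℝ := min (η/2) 1 with hδdef
  have hδ0 : 0 < δ := lt_min (by linarith) one_pos
  have hδ1 : δ ≤ 1 := min_le_right _ _
  have hδη : δ < η := lt_of_le_of_lt (min_le_left _ _) (by linarith)
  have hmap : ∀ t ∈ Set.Ioo (-η) η, (x + t • z) ∈ Metric.ball x η := by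
    intro t ht
    rw [Metric.mem_ball, dist_eq_norm, add_sub_cancel_left, norm_smul, hznorm,
      Real.norm_eq_abs, mul_one]
    exact abs_lt.mpr ⟨ht.1, ht.2⟩
  have hgC2 : ContDiffOn ℝ 2 (fun t : ℝ => u (x + t • z)) (Set.Ioo (-η) η) := by
    apply hu2.comp ((contDiff_const.add (contDiff_id.smul contDiff_const)).contDiffOn)
    intro t ht
    exact hmap t ht
  obtain ⟨C₂, hC₂0, hTay⟩ := taylor_even_bound hη hδ0 hδη hgC2
  have hTaylor : ∀ ρ ∈ Set.Icc 0 δ, |h ρ| ≤ C₂ * ρ ^ 2 := by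
    intro ρ hρ
    have htt := hTay ρ hρ
    have e0 : x + (0:ℝ) • z = x := by rw [zero_smul, add_zero]
    have eneg : x + (-ρ) • z = x - ρ • z := by rw [neg_smul, ← sub_eq_add_neg]
    rw [e0, eneg] at htt
    simp only [hhdef, hφdef]
    calc |2 * u x - (u (x + ρ • z) + u (x - ρ • z))|
        = |2 * u x - u (x + ρ • z) - u (x - ρ • z)| := by rw [sub_sub]
      _ ≤ C₂ * ρ ^ 2 := htt
  set A : ℝ := C₂ + 4 * M / δ ^ 2 + 1 with hAdef
  have hA1 : 0 < A := by positivity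
  have hA : ∀ ρ : ℝ, 0 < ρ → |h ρ| ≤ A * min (ρ ^ 2) 1 := by
    intro ρ hρ
    rcases le_or_gt ρ δ with hle | hgt
    · have hmin : min (ρ ^ 2) 1 = ρ ^ 2 := min_eq_left (by nlinarith)
      rw [hmin]
      have ht := hTaylor ρ ⟨hρ.le, hle⟩
      have hq : (0:ℝ) ≤ 4 * M / δ ^ 2 := by positivity
      have hCA : C₂ * ρ ^ 2 ≤ A * ρ ^ 2 :=
        mul_le_mul_of_nonneg_right (by rw [hAdef]; linarith) (sq_nonneg ρ)
      linarith
    · have hmin1 : δ ^ 2 ≤ min (ρ ^ 2) 1 := le_min (by nlinarith) (by nlinarith)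
      have hmin0 : (0:ℝ) ≤ min (ρ ^ 2) 1 := le_min (sq_nonneg ρ) zero_le_one
      have h4 := hh4 ρ
      calc |h ρ| ≤ 4 * M := h4
        _ ≤ (4 * M / δ ^ 2) * min (ρ ^ 2) 1 := by
            rw [div_mul_eq_mul_div, le_div_iff₀ (by positivity)]
            nlinarith
        _ ≤ A * min (ρ ^ 2) 1 := by
            apply mul_le_mul_of_nonneg_right _ hmin0
            rw [hAdef]
            linarith
  -- the two universal integrals
  set I : ℝ := ∫ t in Set.Ioi (1:ℝ), (t * (t ^ 2 - 1) ^ s)⁻¹ with hIdef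
  have hIpos : 0 < I := kernel_integral_pos ⟨hs1, hs2⟩
  set J : ℝ := ∫ t in Set.Ioi (1:ℝ), t ^ 2 * (((t ^ 2 - 1) ^ s * t)⁻¹ - (t ^ (1+2*s))⁻¹)
    with hJdef
  have hJ0 : 0 ≤ J := setIntegral_nonneg measurableSet_Ioi
    (fun t ht => G_nonneg ⟨hs1, hs2⟩ ht)
  have hcs : 0 < csInf s := csInf_pos ⟨hs1, hs2⟩
  have hcsI : csInf s * I = 1/2 := by
    rw [show csInf s = (1 / 2) * I⁻¹ from rfl]
    field_simp
  have h22s : (0:ℝ) < 2 - 2*s := by linarith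
  refine ⟨csInf s * A * (J + 1/(2-2*s)) + 1, by positivity, 1, one_pos, ?_⟩
  intro r hr
  obtain ⟨hr0, hr1⟩ := hr
  obtain ⟨hKint, hKval⟩ := K_subst ⟨hs1, hs2⟩ hr0 (kernel_integrable ⟨hs1, hs2⟩)
  obtain ⟨hFint, hFval⟩ := F_subst ⟨hs1, hs2⟩ hr0 (G_integrable ⟨hs1, hs2⟩)
  -- kernel comparison on Ioi r
  have hKW : ∀ ρ ∈ Set.Ioi r, (ρ ^ (1+2*s))⁻¹ ≤ ((ρ^2 - r^2) ^ s * ρ)⁻¹ := by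
    intro ρ hρ
    rw [Set.mem_Ioi] at hρ
    have hρ0 : 0 < ρ := lt_trans hr0 hρ
    have hd : (0:ℝ) < ρ^2 - r^2 := by nlinarith
    apply inv_anti₀ (by positivity)
    calc (ρ^2 - r^2) ^ s * ρ ≤ (ρ^2) ^ s * ρ := by
          apply mul_le_mul_of_nonneg_right _ hρ0.le
          exact Real.rpow_le_rpow hd.le (by nlinarith) hs0.le
      _ = ρ ^ (1+2*s) := by
          rw [sq_rpow' hρ0.le, show (1+2*s:ℝ) = 2*s+1 by ring,
            Real.rpow_add hρ0, Real.rpow_one]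
  -- integrability of h·W on Ioi 0
  have hWmeas : Measurable (fun ρ : ℝ => h ρ * (ρ ^ (1+2*s))⁻¹) := by
    apply hhmeas.mul
    fun_prop
  have hhW : IntegrableOn (fun ρ : ℝ => h ρ * (ρ ^ (1+2*s))⁻¹) (Set.Ioi 0) := by
    rw [← Set.Ioc_union_Ioi_eq_Ioi (zero_le_one)]
    apply MeasureTheory.IntegrableOn.union
    · have hint : IntegrableOn (fun ρ : ℝ => A * ρ ^ (1-2*s)) (Set.Ioc 0 1) := by
        have hi := intervalIntegral.intervalIntegrable_rpow' (r := 1-2*s)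
          (by linarith) (a := 0) (b := 1)
        rw [intervalIntegrable_iff_integrableOn_Ioc_of_le zero_le_one] at hi
        exact hi.const_mul A
      apply hint.mono' hWmeas.aestronglyMeasurable
      filter_upwards [ae_restrict_mem measurableSet_Ioc] with ρ hρ
      obtain ⟨hρ0, hρ1⟩ := hρ
      have hWpos : (0:ℝ) < (ρ ^ (1+2*s))⁻¹ := by
        have := Real.rpow_pos_of_pos hρ0 (1+2*s); positivity
      rw [Real.norm_eq_abs, abs_mul, abs_of_pos hWpos]
      have hmin : min (ρ ^ 2) 1 = ρ ^ 2 := min_eq_left (by nlinarith)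
      have hb := hA ρ hρ0
      rw [hmin] at hb
      calc |h ρ| * (ρ ^ (1+2*s))⁻¹ ≤ (A * ρ ^ 2) * (ρ ^ (1+2*s))⁻¹ :=
            mul_le_mul_of_nonneg_right hb hWpos.le
        _ = A * ρ ^ (1-2*s) := by rw [mul_assoc, rsq_mul_inv hρ0]
    · have hint : IntegrableOn (fun ρ : ℝ => A * ρ ^ (-(1+2*s))) (Set.Ioi 1) :=
        (integrableOn_Ioi_rpow_of_lt (by linarith) one_pos).const_mul A
      apply hint.mono' hWmeas.aestronglyMeasurable
      filter_upwards [ae_restrict_mem measurableSet_Ioi] with ρ hρ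
      rw [Set.mem_Ioi] at hρ
      have hρ0 : (0:ℝ) < ρ := by linarith
      have hWpos : (0:ℝ) < (ρ ^ (1+2*s))⁻¹ := by
        have := Real.rpow_pos_of_pos hρ0 (1+2*s); positivity
      rw [Real.norm_eq_abs, abs_mul, abs_of_pos hWpos]
      have hb := hA ρ hρ0
      have hmin : min (ρ ^ 2) 1 ≤ 1 := min_le_right _ _
      calc |h ρ| * (ρ ^ (1+2*s))⁻¹ ≤ (A * 1) * (ρ ^ (1+2*s))⁻¹ := by
            apply mul_le_mul_of_nonneg_right _ hWpos.le
            calc |h ρ| ≤ A * min (ρ ^ 2) 1 := hb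
              _ ≤ A * 1 := mul_le_mul_of_nonneg_left hmin hA1.le
        _ = A * ρ ^ (-(1+2*s)) := by rw [Real.rpow_neg hρ0.le, mul_one]
  have hhW_r : IntegrableOn (fun ρ : ℝ => h ρ * (ρ ^ (1+2*s))⁻¹) (Set.Ioi r) :=
    hhW.mono_set (Set.Ioi_subset_Ioi hr0.le)
  -- integrability and domination of h·(K-W) on Ioi r
  have hDdom : ∀ ρ ∈ Set.Ioi r,
      |h ρ * (((ρ^2 - r^2) ^ s * ρ)⁻¹ - (ρ ^ (1+2*s))⁻¹)|
        ≤ A * (ρ^2 * (((ρ^2 - r^2) ^ s * ρ)⁻¹ - (ρ ^ (1+2*s))⁻¹)) := by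
    intro ρ hρ
    have hρ0 : 0 < ρ := lt_trans hr0 (Set.mem_Ioi.mp hρ)
    have hd0 : (0:ℝ) ≤ ((ρ^2 - r^2) ^ s * ρ)⁻¹ - (ρ ^ (1+2*s))⁻¹ :=
      sub_nonneg.mpr (hKW ρ hρ)
    rw [abs_mul, abs_of_nonneg hd0]
    have hb := hA ρ hρ0
    have hmin : min (ρ ^ 2) 1 ≤ ρ ^ 2 := min_le_left _ _
    calc |h ρ| * (((ρ^2 - r^2) ^ s * ρ)⁻¹ - (ρ ^ (1+2*s))⁻¹)
        ≤ (A * ρ ^ 2) * (((ρ^2 - r^2) ^ s * ρ)⁻¹ - (ρ ^ (1+2*s))⁻¹) := by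
          apply mul_le_mul_of_nonneg_right _ hd0
          calc |h ρ| ≤ A * min (ρ ^ 2) 1 := hb
            _ ≤ A * ρ ^ 2 := mul_le_mul_of_nonneg_left hmin hA1.le
      _ = A * (ρ^2 * (((ρ^2 - r^2) ^ s * ρ)⁻¹ - (ρ ^ (1+2*s))⁻¹)) := by ring
  have hDmeas : Measurable
      (fun ρ : ℝ => h ρ * (((ρ^2 - r^2) ^ s * ρ)⁻¹ - (ρ ^ (1+2*s))⁻¹)) := by
    apply hhmeas.mul
    fun_prop
  have hhD : IntegrableOn
      (fun ρ : ℝ => h ρ * (((ρ^2 - r^2) ^ s * ρ)⁻¹ - (ρ ^ (1+2*s))⁻¹)) (Set.Ioi r) := by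
    apply (hFint.const_mul A).mono' hDmeas.aestronglyMeasurable
    filter_upwards [ae_restrict_mem measurableSet_Ioi] with ρ hρ
    rw [Real.norm_eq_abs]
    exact hDdom ρ hρ
  have hhK : IntegrableOn (fun ρ : ℝ => h ρ * ((ρ^2 - r^2) ^ s * ρ)⁻¹) (Set.Ioi r) := by
    have hsum : IntegrableOn (fun ρ : ℝ => h ρ * (ρ ^ (1+2*s))⁻¹
        + h ρ * (((ρ^2 - r^2) ^ s * ρ)⁻¹ - (ρ ^ (1+2*s))⁻¹)) (Set.Ioi r) :=
      hhW_r.add hhD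
    exact hsum.congr_fun (fun ρ _ => by ring) measurableSet_Ioi
  -- E1
  have E1 : (∫ ρ in Set.Ioi r, φ ρ * ((ρ^2 - r^2) ^ s * ρ)⁻¹)
      = 2 * u x * (r ^ (-(2*s)) * I)
        - ∫ ρ in Set.Ioi r, h ρ * ((ρ^2 - r^2) ^ s * ρ)⁻¹ := by
    have hcg : ∀ ρ ∈ Set.Ioi r, φ ρ * ((ρ^2 - r^2) ^ s * ρ)⁻¹
        = 2 * u x * ((ρ^2 - r^2) ^ s * ρ)⁻¹ - h ρ * ((ρ^2 - r^2) ^ s * ρ)⁻¹ := by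
      intro ρ _
      simp only [hhdef]
      ring
    rw [setIntegral_congr_fun measurableSet_Ioi hcg,
      integral_sub (hKint.const_mul _) hhK, integral_const_mul, hKval]
  -- E2
  have E2 : (∫ ρ in Set.Ioi (0:ℝ), h ρ * (ρ ^ (1+2*s))⁻¹)
      = (∫ ρ in Set.Ioo 0 r, h ρ * (ρ ^ (1+2*s))⁻¹)
        + ∫ ρ in Set.Ioi r, h ρ * (ρ ^ (1+2*s))⁻¹ := by
    rw [show Set.Ioi (0:ℝ) = Set.Ioc 0 r ∪ Set.Ioi r from
      (Set.Ioc_union_Ioi_eq_Ioi hr0.le).symm]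
    rw [setIntegral_union (Set.Ioc_disjoint_Ioi le_rfl) measurableSet_Ioi
      (hhW.mono_set (fun ρ hρ => hρ.1)) hhW_r]
    rw [integral_Ioc_eq_integral_Ioo]
  -- E3
  have E3 : (∫ ρ in Set.Ioi r, h ρ * (((ρ^2 - r^2) ^ s * ρ)⁻¹ - (ρ ^ (1+2*s))⁻¹))
      = (∫ ρ in Set.Ioi r, h ρ * ((ρ^2 - r^2) ^ s * ρ)⁻¹)
        - ∫ ρ in Set.Ioi r, h ρ * (ρ ^ (1+2*s))⁻¹ := by
    rw [← integral_sub hhK hhW_r]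
    apply setIntegral_congr_fun measurableSet_Ioi
    intro ρ _
    ring
  -- Bound 1
  have B1 : |∫ ρ in Set.Ioi r, h ρ * (((ρ^2 - r^2) ^ s * ρ)⁻¹ - (ρ ^ (1+2*s))⁻¹)|
      ≤ A * (r ^ (2-2*s) * J) := by
    calc |∫ ρ in Set.Ioi r, h ρ * (((ρ^2 - r^2) ^ s * ρ)⁻¹ - (ρ ^ (1+2*s))⁻¹)|
        ≤ ∫ ρ in Set.Ioi r, |h ρ * (((ρ^2 - r^2) ^ s * ρ)⁻¹ - (ρ ^ (1+2*s))⁻¹)| := by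
          have hni := norm_integral_le_integral_norm
            (μ := volume.restrict (Set.Ioi r))
            (f := fun ρ : ℝ => h ρ * (((ρ^2 - r^2) ^ s * ρ)⁻¹ - (ρ ^ (1+2*s))⁻¹))
          simpa only [Real.norm_eq_abs] using hni
      _ ≤ ∫ ρ in Set.Ioi r, A * (ρ^2 * (((ρ^2 - r^2) ^ s * ρ)⁻¹ - (ρ ^ (1+2*s))⁻¹)) :=
          setIntegral_mono_on hhD.abs (hFint.const_mul A) measurableSet_Ioi hDdom
      _ = A * (r ^ (2-2*s) * J) := by rw [integral_const_mul, hFval]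
  -- Bound 2
  have hIoo_int : IntegrableOn (fun ρ : ℝ => h ρ * (ρ ^ (1+2*s))⁻¹) (Set.Ioo 0 r) :=
    hhW.mono_set (fun ρ hρ => hρ.1)
  have hdom2 : IntegrableOn (fun ρ : ℝ => A * ρ ^ (1-2*s)) (Set.Ioo 0 r) :=
    ((intervalIntegral.integrableOn_Ioo_rpow_iff hr0).mpr (by linarith)).const_mul A
  have hrint : (∫ ρ in Set.Ioo 0 r, ρ ^ (1-2*s)) = r ^ (2-2*s) / (2-2*s) := by
    rw [← integral_Ioc_eq_integral_Ioo, ← intervalIntegral.integral_of_le hr0.le]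
    rw [integral_rpow (Or.inl (by linarith))]
    rw [Real.zero_rpow (by intro hc; rw [show (1:ℝ)-2*s+1 = 2-2*s by ring] at hc; linarith)]
    rw [show (1:ℝ)-2*s+1 = 2-2*s by ring]
    ring
  have B2 : |∫ ρ in Set.Ioo 0 r, h ρ * (ρ ^ (1+2*s))⁻¹| ≤ A * (r ^ (2-2*s) / (2-2*s)) := by
    calc |∫ ρ in Set.Ioo 0 r, h ρ * (ρ ^ (1+2*s))⁻¹|
        ≤ ∫ ρ in Set.Ioo 0 r, |h ρ * (ρ ^ (1+2*s))⁻¹| := by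
          have hni := norm_integral_le_integral_norm
            (μ := volume.restrict (Set.Ioo 0 r))
            (f := fun ρ : ℝ => h ρ * (ρ ^ (1+2*s))⁻¹)
          simpa only [Real.norm_eq_abs] using hni
      _ ≤ ∫ ρ in Set.Ioo 0 r, A * ρ ^ (1-2*s) := by
          apply setIntegral_mono_on hIoo_int.abs hdom2 measurableSet_Ioo
          intro ρ hρ
          obtain ⟨hρ0, hρr⟩ := hρ
          have hρ1 : ρ ≤ 1 := by linarith
          have hWpos : (0:ℝ) < (ρ ^ (1+2*s))⁻¹ := by
            have := Real.rpow_pos_of_pos hρ0 (1+2*s); positivity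
          rw [abs_mul, abs_of_pos hWpos]
          have hmin : min (ρ ^ 2) 1 = ρ ^ 2 := min_eq_left (by nlinarith)
          have hb := hA ρ hρ0
          rw [hmin] at hb
          calc |h ρ| * (ρ ^ (1+2*s))⁻¹ ≤ (A * ρ ^ 2) * (ρ ^ (1+2*s))⁻¹ :=
                mul_le_mul_of_nonneg_right hb hWpos.le
            _ = A * ρ ^ (1-2*s) := by rw [mul_assoc, rsq_mul_inv hρ0]
      _ = A * (r ^ (2-2*s) / (2-2*s)) := by rw [integral_const_mul, hrint]
  -- rewrite the L-integral
  have hLint : (∫ ρ in Set.Ioi (0:ℝ),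
      (2 * u x - u (x + ρ • z) - u (x - ρ • z)) / ρ ^ (1 + 2 * s))
      = ∫ ρ in Set.Ioi (0:ℝ), h ρ * (ρ ^ (1+2*s))⁻¹ := by
    apply integral_congr_ae (ae_of_all _ ?_)
    intro ρ
    simp only [hhdef, hφdef]
    rw [div_eq_mul_inv]
    ring
  -- cancellation identity
  have hone : r ^ (2*s) * r ^ (-(2*s)) = 1 := by
    rw [rpow_combine hr0, show 2*s + -(2*s) = (0:ℝ) by ring, Real.rpow_zero]
  have hcancel : csInf s * r ^ (2*s) * (2 * u x * (r ^ (-(2*s)) * I)) = u x := by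
    rw [show csInf s * r ^ (2*s) * (2 * u x * (r ^ (-(2*s)) * I))
      = (csInf s * I) * (r ^ (2*s) * r ^ (-(2*s))) * (2 * u x) by ring, hcsI, hone]
    ring
  have key : u x
      - csInf s * r ^ (2*s) * (∫ ρ in Set.Ioi r, φ ρ * ((ρ^2 - r^2) ^ s * ρ)⁻¹)
      - csInf s * r ^ (2*s) * (∫ ρ in Set.Ioi (0:ℝ), h ρ * (ρ ^ (1+2*s))⁻¹)
      = csInf s * r ^ (2*s) *
        ((∫ ρ in Set.Ioi r, h ρ * (((ρ^2 - r^2) ^ s * ρ)⁻¹ - (ρ ^ (1+2*s))⁻¹))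
          - ∫ ρ in Set.Ioo 0 r, h ρ * (ρ ^ (1+2*s))⁻¹) := by
    rw [E1, E2, E3]
    linear_combination -1 * hcancel
  have hr2 : r ^ (2*s) * r ^ (2-2*s) = r ^ 2 := by
    rw [rpow_combine hr0, show 2*s + (2-2*s) = ((2:ℕ):ℝ) by push_cast; ring,
      Real.rpow_natCast]
  have hrp : (0:ℝ) < r ^ (2*s) := Real.rpow_pos_of_pos hr0 _
  calc |u x -
          csInf s * r ^ (2 * s) *
            (∫ ρ in Set.Ioi r, φ ρ * ((ρ ^ 2 - r ^ 2) ^ s * ρ)⁻¹) -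
          csInf s * r ^ (2 * s) *
            (∫ ρ in Set.Ioi (0:ℝ),
              (2 * u x - u (x + ρ • z) - u (x - ρ • z)) / ρ ^ (1 + 2 * s))|
      = |csInf s * r ^ (2*s) *
        ((∫ ρ in Set.Ioi r, h ρ * (((ρ^2 - r^2) ^ s * ρ)⁻¹ - (ρ ^ (1+2*s))⁻¹))
          - ∫ ρ in Set.Ioo 0 r, h ρ * (ρ ^ (1+2*s))⁻¹)| := by rw [hLint, key]
    _ ≤ csInf s * r ^ (2*s) * (A * (r ^ (2-2*s) * J) + A * (r ^ (2-2*s) / (2-2*s))) := by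
        rw [abs_mul, abs_of_pos (mul_pos hcs hrp)]
        apply mul_le_mul_of_nonneg_left _ (mul_pos hcs hrp).le
        calc |(∫ ρ in Set.Ioi r, h ρ * (((ρ^2 - r^2) ^ s * ρ)⁻¹ - (ρ ^ (1+2*s))⁻¹))
              - ∫ ρ in Set.Ioo 0 r, h ρ * (ρ ^ (1+2*s))⁻¹|
            ≤ |∫ ρ in Set.Ioi r, h ρ * (((ρ^2 - r^2) ^ s * ρ)⁻¹ - (ρ ^ (1+2*s))⁻¹)|
              + |∫ ρ in Set.Ioo 0 r, h ρ * (ρ ^ (1+2*s))⁻¹| := abs_sub _ _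
          _ ≤ A * (r ^ (2-2*s) * J) + A * (r ^ (2-2*s) / (2-2*s)) := add_le_add B1 B2
    _ = csInf s * A * (J + 1/(2-2*s)) * r ^ 2 := by
        linear_combination (csInf s * A * (J + 1/(2-2*s))) * hr2
    _ ≤ (csInf s * A * (J + 1/(2-2*s)) + 1) * r ^ 2 := by nlinarith [sq_nonneg r]
end
end

section
/- Let s ∈ (0,1). Then the function r ↦ ∫₁^{1/r} t( (t²−1)^{−s} − t^{−2s} ) dt is O(1) as r → 0⁺; that is, there exist C > 0 and r₀ ∈ (0,1) such that 0 ≤ ∫₁^{1/r} t( (t²−1)^{−s} − t^{−2s} ) dt ≤ C for all r ∈ (0, r₀). -/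
open MeasureTheory Filter Real Set
open scoped Topology

noncomputable def Fant (s t : ℝ) : ℝ := ((t^2-1)^(1-s) - t^(2-2*s))/(2*(1-s))

lemma integrand_nonneg (s : ℝ) (hs : s ∈ Set.Ioo (0:ℝ) 1) {t : ℝ} (ht : 1 < t) :
    0 ≤ t * ((t ^ 2 - 1) ^ (-s) - t ^ (-(2 * s))) := by
  have ht0 : (0:ℝ) < t := lt_trans one_pos ht
  have h1 : (0:ℝ) < t^2 - 1 := by nlinarith
  have h2 : t ^ (-(2*s)) = (t^2) ^ (-s) := by
    rw [← Real.rpow_natCast t 2, ← Real.rpow_mul ht0.le]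
    norm_num
  apply mul_nonneg ht0.le
  rw [sub_nonneg, h2]
  exact Real.rpow_le_rpow_of_nonpos h1 (by nlinarith) (neg_nonpos.mpr hs.1.le)

lemma integrableOn_aux (s : ℝ) (hs : s ∈ Set.Ioo (0:ℝ) 1) {b : ℝ} (hb : 1 < b) :
    IntegrableOn (fun t => t * ((t ^ 2 - 1) ^ (-s) - t ^ (-(2 * s)))) (Set.Ioc 1 b) := by
  obtain ⟨hs0, hs1⟩ := hs
  have hg : IntegrableOn (fun t => t * (t ^ 2 - 1) ^ (-s)) (Set.Ioc 1 b) := by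
    have hbound : IntegrableOn (fun t => b * (t - 1) ^ (-s)) (Set.Ioc 1 b) := by
      have h1 : IntervalIntegrable (fun x : ℝ => x ^ (-s)) volume 0 (b - 1) :=
        intervalIntegral.intervalIntegrable_rpow' (by linarith)
      have h2 := h1.comp_sub_right 1
      norm_num at h2
      have h3 : IntegrableOn (fun x : ℝ => (x - 1) ^ (-s)) (Set.Ioc 1 b) := by
        rw [intervalIntegrable_iff_integrableOn_Ioc_of_le (by linarith)] at h2
        exact h2
      exact h3.const_mul b
    apply hbound.integrable.mono'
    · apply ContinuousOn.aestronglyMeasurable _ measurableSet_Ioc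
      apply ContinuousOn.mul continuousOn_id
      apply ContinuousOn.rpow_const (by fun_prop)
      intro t ht
      left
      have : (1:ℝ) < t := ht.1
      nlinarith [this]
    · filter_upwards [ae_restrict_mem measurableSet_Ioc] with t ht
      have ht1 : (1:ℝ) < t := ht.1
      have ht0 : (0:ℝ) < t := lt_trans one_pos ht1
      have hp : (0:ℝ) < t ^ 2 - 1 := by nlinarith
      have hq : (0:ℝ) < t - 1 := by linarith
      rw [Real.norm_eq_abs, abs_of_nonneg (mul_nonneg ht0.le (Real.rpow_nonneg hp.le _))]
      have h4 : (t ^ 2 - 1) ^ (-s) ≤ (t - 1) ^ (-s) :=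
        Real.rpow_le_rpow_of_nonpos hq (by nlinarith) (neg_nonpos.mpr hs0.le)
      have h5 : (0:ℝ) ≤ (t - 1) ^ (-s) := Real.rpow_nonneg hq.le _
      exact mul_le_mul ht.2 h4 (Real.rpow_nonneg hp.le _) (by linarith)
  have hh : IntegrableOn (fun t => t * t ^ (-(2 * s))) (Set.Ioc 1 b) := by
    have hcont : ContinuousOn (fun t : ℝ => t * t ^ (-(2 * s))) (Set.Icc 1 b) := by
      apply ContinuousOn.mul continuousOn_id
      apply ContinuousOn.rpow_const continuousOn_id
      intro t ht
      left
      have h1t : (1:ℝ) ≤ t := ht.1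
      simp only [id_eq]
      exact ne_of_gt (by linarith)
    exact (ContinuousOn.integrableOn_compact isCompact_Icc hcont).mono_set
      Set.Ioc_subset_Icc_self
  have hsub := hg.sub hh
  apply hsub.congr
  filter_upwards with t
  simp only [Pi.sub_apply]
  ring

lemma hasDerivAt_Fant (s : ℝ) (hs : s ∈ Set.Ioo (0:ℝ) 1) {t : ℝ} (ht : 1 < t) :
    HasDerivAt (Fant s) (t * ((t ^ 2 - 1) ^ (-s) - t ^ (-(2 * s)))) t := by
  obtain ⟨hs0, hs1⟩ := hs
  have ht0 : (0:ℝ) < t := lt_trans one_pos ht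
  have hp : (0:ℝ) < t ^ 2 - 1 := by nlinarith
  have h1 : HasDerivAt (fun t : ℝ => t ^ 2 - 1) (2 * t) t := by
    simpa using ((hasDerivAt_pow 2 t).sub_const 1)
  have h2 := h1.rpow_const (p := 1 - s) (Or.inl hp.ne')
  have h3 : HasDerivAt (fun t : ℝ => t ^ (2 - 2 * s)) ((2 - 2 * s) * t ^ (2 - 2 * s - 1)) t :=
    Real.hasDerivAt_rpow_const (Or.inl ht0.ne')
  have h4 := (h2.sub h3).div_const (2 * (1 - s))
  convert h4 using 1
  · rfl
  · rfl
  · rfl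
  have e1 : (1:ℝ) - s - 1 = -s := by ring
  have e2 : (2:ℝ) - 2 * s - 1 = 1 - 2 * s := by ring
  rw [e1, e2]
  have e3 : t ^ (1 - 2 * s) = t * t ^ (-(2 * s)) := by
    rw [show (1:ℝ) - 2 * s = 1 + -(2 * s) by ring, Real.rpow_add ht0, Real.rpow_one]
  rw [e3, eq_div_iff (ne_of_gt (by nlinarith : (0:ℝ) < 2 * (1 - s)))]
  ring

lemma integral_eq_aux (s : ℝ) (hs : s ∈ Set.Ioo (0:ℝ) 1) {b : ℝ} (hb : 1 < b) :
    ∫ t in Set.Ioo (1:ℝ) b, t * ((t ^ 2 - 1) ^ (-s) - t ^ (-(2 * s)))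
      = Fant s b - Fant s 1 := by
  rw [← integral_Ioc_eq_integral_Ioo, ← intervalIntegral.integral_of_le hb.le]
  apply intervalIntegral.integral_eq_sub_of_hasDeriv_right_of_le hb.le
  · -- continuity of Fant on Icc 1 b
    apply ContinuousOn.div_const
    apply ContinuousOn.sub
    · apply ContinuousOn.rpow_const (by fun_prop)
      intro t ht
      right; linarith [hs.2]
    · apply ContinuousOn.rpow_const continuousOn_id
      intro t ht
      left
      have h1t : (1:ℝ) ≤ t := ht.1
      simp only [id_eq]
      exact ne_of_gt (by linarith)
  · intro t ht
    exact (hasDerivAt_Fant s hs ht.1).hasDerivWithinAt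
  · rw [intervalIntegrable_iff_integrableOn_Ioc_of_le hb.le]
    exact integrableOn_aux s hs hb

/-- For `s ∈ (0,1)`, `∫₁^{1/r} t((t²-1)^{-s} - t^{-2s}) dt = O(1)`
as `r → 0⁺`. -/
theorem integral_asymptotic_O_one (s : ℝ) (hs : s ∈ Set.Ioo (0:ℝ) 1) :
    ∃ C > (0:ℝ), ∃ r₀ ∈ Set.Ioo (0:ℝ) 1, ∀ r ∈ Set.Ioo (0:ℝ) r₀,
      0 ≤ (∫ t in Set.Ioo (1:ℝ) r⁻¹, t * ((t ^ 2 - 1) ^ (-s) - t ^ (-(2 * s)))) ∧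
      (∫ t in Set.Ioo (1:ℝ) r⁻¹, t * ((t ^ 2 - 1) ^ (-s) - t ^ (-(2 * s)))) ≤ C := by
  obtain ⟨hs0, hs1⟩ := hs
  refine ⟨1 / (2 * (1 - s)), div_pos one_pos (by linarith), 1/2, by norm_num, fun r hr => ?_⟩
  have hb : (1:ℝ) < r⁻¹ := by
    rw [lt_inv_comm₀ one_pos hr.1]
    · linarith [hr.2]
  constructor
  · apply setIntegral_nonneg measurableSet_Ioo
    intro t ht
    exact integrand_nonneg s ⟨hs0, hs1⟩ ht.1
  · rw [integral_eq_aux s ⟨hs0, hs1⟩ hb]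
    set b := r⁻¹
    have hb0 : (0:ℝ) < b := lt_trans one_pos hb
    have hF1 : Fant s 1 = -1 / (2 * (1 - s)) := by
      unfold Fant
      rw [show (1:ℝ)^2 - 1 = 0 by ring, Real.zero_rpow (ne_of_gt (by linarith)),
        Real.one_rpow]
      ring
    have hFb : Fant s b ≤ 0 := by
      unfold Fant
      apply div_nonpos_of_nonpos_of_nonneg _ (by nlinarith)
      rw [sub_nonpos]
      have e : b ^ (2 - 2 * s) = (b ^ 2) ^ (1 - s) := by
        rw [← Real.rpow_natCast b 2, ← Real.rpow_mul hb0.le]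
        norm_num
        ring_nf
      rw [e]
      apply Real.rpow_le_rpow (by nlinarith) (by nlinarith) (by linarith)
    rw [hF1]
    have : Fant s b - (-1 / (2 * (1 - s))) = Fant s b + 1 / (2 * (1 - s)) := by ring
    rw [this]
    linarith
end
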